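/- Let A be a pro-p group obtained from a finitely generated pro-p group B by k successive proper pro-p HNN extensions with stable letters t₁,…,t_k and associated procyclic subgroups C_i = ⟨c_i⟩, C̃_i = ⟨c̃_i⟩ ≤ B (c_i^{t_i} = c̃_i). Then d(B) ≤ d(A) ≤ d(B) + k; moreover d(A) = d(B) if and only if the images of c_i⁻¹c̃_i (1 ≤ i ≤ k) in B/Φ(B) are linearly independent over 𝔽_p. -/

import Mathlib

/-- A pro-`p` group: a compact, Hausdorff, totally disconnected topological group in
which every open normal subgroup has `p`-power index. -/
def IsProP (p : ℕ) (G : Type*) [Group G] [TopologicalSpace G] : Prop :=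
  IsTopologicalGroup G ∧ CompactSpace G ∧ T2Space G ∧ TotallyDisconnectedSpace G ∧
    ∀ U : Subgroup G, U.Normal → IsOpen (U : Set G) → ∃ k : ℕ, U.index = p ^ k

/-- The minimal number of topological generators of a topological group. -/
noncomputable def topGenNum (G : Type*) [Group G] [TopologicalSpace G]
    [IsTopologicalGroup G] : ℕ :=
  sInf {n : ℕ | ∃ s : Fin n → G,
    (Subgroup.closure (Set.range s)).topologicalClosure = ⊤}

/-- A topological group is topologically finitely generated. -/
def TopFG (G : Type*) [Group G] [TopologicalSpace G] [IsTopologicalGroup G] : Prop :=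
  ∃ n : ℕ, ∃ s : Fin n → G,
    (Subgroup.closure (Set.range s)).topologicalClosure = ⊤

/-- `F` is a free pro-`p` group of rank `d`: it has a `d`-tuple of topological
generators which is universal for continuous maps to finite `p`-groups. -/
def IsFreeProP (p : ℕ) (F : Type*) [Group F] [TopologicalSpace F]
    [IsTopologicalGroup F] (d : ℕ) : Prop :=
  ∃ b : Fin d → F,
    (Subgroup.closure (Set.range b)).topologicalClosure = ⊤ ∧
    ∀ (P : Type) [Group P] [Finite P] [TopologicalSpace P] [DiscreteTopology P],
      IsPGroup p P → ∀ f : Fin d → P,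
        ∃! φ : F →* P, Continuous φ ∧ ∀ i, φ (b i) = f i

/-- The Frattini subgroup of a pro-`p` group: the closure of `[G,G]·G^p`. -/
def proFrattini (p : ℕ) (G : Type*) [Group G] [TopologicalSpace G]
    [IsTopologicalGroup G] : Subgroup G :=
  (commutator G ⊔ Subgroup.closure {x : G | ∃ g : G, g ^ p = x}).topologicalClosure


open Module
open scoped commutatorElement

variable {p : ℕ} [Fact p.Prime]

/-- verbal subgroup `[G,G]G^p` -/
def Rsub (p : ℕ) (G : Type*) [Group G] : Subgroup G :=
  commutator G ⊔ Subgroup.closure {x : G | ∃ g : G, g ^ p = x}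

lemma normal_of_commutator_le {G : Type*} [Group G] {H : Subgroup G}
    (h : commutator G ≤ H) : H.Normal := by
  constructor
  intro n hn g
  have h1 : ⁅g, n⁆ ∈ H := h (Subgroup.commutator_mem_commutator (Subgroup.mem_top g)
    (Subgroup.mem_top n))
  have : g * n * g⁻¹ = ⁅g, n⁆ * n := by group
  rw [this]
  exact H.mul_mem h1 hn

instance Rsub_normal {G : Type*} [Group G] : (Rsub p G).Normal :=
  normal_of_commutator_le le_sup_left

omit [Fact p.Prime] in
lemma pow_p_mem_Rsub {G : Type*} [Group G] (g : G) : g ^ p ∈ Rsub p G :=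
  Subgroup.mem_sup_right (Subgroup.subset_closure ⟨g, rfl⟩)

omit [Fact p.Prime] in
lemma commutator_le_Rsub {G : Type*} [Group G] : commutator G ≤ Rsub p G := le_sup_left

/-- The elementary-abelian separation lemma. -/
lemma exists_hom_of_not_mem {Q : Type*} [Group Q] [Finite Q] {N : Subgroup Q}
    (hRN : Rsub p Q ≤ N) {x : Q} (hx : x ∉ N) :
    ∃ f : Q →* Multiplicative (ZMod p), (∀ h ∈ N, f h = 1) ∧ f x ≠ 1 := by
  haveI : NeZero p := ⟨(Fact.out : p.Prime).ne_zero⟩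
  set R := Rsub p Q with hR
  let E := Q ⧸ R
  letI : CommGroup E :=
    { (inferInstance : Group E) with
      mul_comm := by
        intro a b
        obtain ⟨a, rfl⟩ := QuotientGroup.mk'_surjective R a
        obtain ⟨b, rfl⟩ := QuotientGroup.mk'_surjective R b
        show ((a * b : Q) : E) = ((b * a : Q) : E)
        rw [QuotientGroup.eq]
        have : (a * b)⁻¹ * (b * a) = ⁅b⁻¹, a⁻¹⁆ := by group
        rw [this]
        exact commutator_le_Rsub
          (Subgroup.commutator_mem_commutator (Subgroup.mem_top _) (Subgroup.mem_top _)) }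
  haveI : Module (ZMod p) (Additive E) := AddCommGroup.zmodModule (by
    intro x
    obtain ⟨a, rfl⟩ := QuotientGroup.mk'_surjective R (Additive.toMul x)
    show p • Additive.ofMul ((a : Q) : E) = 0
    rw [← ofMul_pow]
    have : ((a : Q) : E) ^ p = (((a ^ p : Q) : E)) := rfl
    rw [this, (QuotientGroup.eq_one_iff _).2 (pow_p_mem_Rsub a)]
    rfl)
  let π : Q →* E := QuotientGroup.mk' R
  let N' : Submodule (ZMod p) (Additive E) :=
    AddSubgroup.toZModSubmodule p (Subgroup.toAddSubgroup (N.map π))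
  have hxN' : Additive.ofMul (π x) ∉ N' := by
    intro hmem
    have : π x ∈ N.map π := hmem
    obtain ⟨n, hn, hnx⟩ := this
    have hninv : n⁻¹ * x ∈ R := by
      rw [← QuotientGroup.eq]
      exact hnx
    have hxeq : x = n * (n⁻¹ * x) := by group
    exact hx (hxeq ▸ N.mul_mem hn (hRN hninv))
  -- pass to the quotient vector space
  have hv : (Submodule.Quotient.mk (Additive.ofMul (π x)) : Additive E ⧸ N') ≠ 0 := by
    rw [Ne, Submodule.Quotient.mk_eq_zero]
    exact hxN'
  obtain ⟨ψ, hψ⟩ : ∃ ψ : Dual (ZMod p) (Additive E ⧸ N'),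
      ψ (Submodule.Quotient.mk (Additive.ofMul (π x))) ≠ 0 := by
    by_contra h
    push_neg at h
    exact hv ((forall_dual_apply_eq_zero_iff (ZMod p) _).mp h)
  let φ : Additive E →+ ZMod p := (ψ.comp N'.mkQ).toAddMonoidHom
  have hφ : ∀ e : Additive E, φ e = ψ (Submodule.Quotient.mk e) := fun _ => rfl
  refine ⟨(AddMonoidHom.toMultiplicativeRight φ).comp π, ?_, ?_⟩
  · intro h hh
    show Multiplicative.ofAdd (φ (Additive.ofMul (π h))) = 1
    have hmem : Additive.ofMul (π h) ∈ N' := ⟨h, hh, rfl⟩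
    have hz : φ (Additive.ofMul (π h)) = 0 := by
      rw [hφ, (Submodule.Quotient.mk_eq_zero _).2 hmem, map_zero]
    rw [hz]; rfl
  · show Multiplicative.ofAdd (φ (Additive.ofMul (π x))) ≠ 1
    intro h
    rw [hφ] at h
    exact hψ (by simpa using congrArg Multiplicative.toAdd h)
-- finite p-group facts
lemma Rsub_le_coatom {Q : Type*} [Group Q] [Finite Q] (hQ : IsPGroup p Q)
    {M : Subgroup Q} (hM : IsCoatom M) : Rsub p Q ≤ M := by
  haveI hMn : M.Normal := by
    have h02 := (isNilpotent_of_finite_tfae (G := Q)).out 0 2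
    exact h02.mp hQ.isNilpotent M hM
  set π : Q →* Q ⧸ M := QuotientGroup.mk' M with hπ
  -- every subgroup of the quotient is ⊥ or ⊤
  have key : ∀ S : Subgroup (Q ⧸ M), S = ⊥ ∨ S = ⊤ := by
    intro S
    have hle : M ≤ S.comap π := by
      intro m hm
      have : π m = 1 := (QuotientGroup.eq_one_iff m).2 hm
      show π m ∈ S
      rw [this]; exact S.one_mem
    rcases eq_or_lt_of_le hle with heq | hlt
    · left
      have : S = Subgroup.map π (S.comap π) :=
        (Subgroup.map_comap_eq_self_of_surjective (QuotientGroup.mk'_surjective M) S).symm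
      rw [this, ← heq]
      rw [Subgroup.map_eq_bot_iff]
      intro m hm
      exact (QuotientGroup.eq_one_iff m).2 hm
    · right
      have : S.comap π = ⊤ := hM.2 _ hlt
      rw [← Subgroup.map_comap_eq_self_of_surjective (QuotientGroup.mk'_surjective M) S, this]
      exact Subgroup.map_top_of_surjective _ (QuotientGroup.mk'_surjective M)
  have hEp : IsPGroup p (Q ⧸ M) := hQ.to_quotient M
  -- the quotient is nontrivial
  haveI : Nontrivial (Q ⧸ M) := by
    rcases (Subgroup.eq_top_iff' M).not.mp hM.1 with h
    push_neg at h
    obtain ⟨x, hx⟩ := h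
    exact ⟨⟨π x, 1, by
      intro hc
      exact hx ((QuotientGroup.eq_one_iff x).1 hc)⟩⟩
  -- exponent p
  have hexp : ∀ z : Q ⧸ M, z ^ p = 1 := by
    intro z
    rcases eq_or_ne z 1 with rfl | hz
    · simp
    · have hzt : Subgroup.zpowers z = ⊤ := by
        rcases key (Subgroup.zpowers z) with h | h
        · exact absurd (Subgroup.zpowers_eq_bot.1 h) hz
        · exact h
      obtain ⟨m, hm⟩ := (IsPGroup.iff_orderOf.mp hEp) z
      have hm0 : m ≠ 0 := by
        rintro rfl
        rw [pow_zero, orderOf_eq_one_iff] at hm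
        exact hz hm
      have hcard : Nat.card (Q ⧸ M) = p ^ m := by
        rw [← hm, ← Nat.card_zpowers, hzt]
        exact Subgroup.card_top.symm
      have hord : orderOf (z ^ p) = p ^ (m - 1) := by
        rw [orderOf_pow, hm]
        have : (p ^ m).gcd p = p := Nat.gcd_eq_right (dvd_pow_self p hm0)
        rw [this]
        have hpd := Nat.pow_div (show 1 ≤ m by omega)
          (Nat.pos_of_ne_zero (Fact.out : p.Prime).ne_zero) (x := p)
        simpa using hpd
      rcases key (Subgroup.zpowers (z ^ p)) with h | h
      · exact Subgroup.zpowers_eq_bot.1 h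
      · exfalso
        have : orderOf (z ^ p) = p ^ m := by
          rw [← Nat.card_zpowers, h, Subgroup.card_top, hcard]
        rw [hord] at this
        have hlt : p ^ (m - 1) < p ^ m :=
          Nat.pow_lt_pow_right (Fact.out : p.Prime).one_lt (by omega)
        omega
  -- commutativity of the quotient
  have hcomm : ∀ a b : Q ⧸ M, a * b = b * a := by
    haveI := IsPGroup.center_nontrivial hEp
    obtain ⟨⟨z, hzc⟩, hzne⟩ := exists_ne (1 : Subgroup.center (Q ⧸ M))
    have hz1 : z ≠ 1 := by
      intro hc
      exact hzne (Subtype.ext hc)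
    have hzt : Subgroup.zpowers z = ⊤ := by
      rcases key (Subgroup.zpowers z) with h | h
      · exact absurd (Subgroup.zpowers_eq_bot.1 h) hz1
      · exact h
    intro a b
    have ha : a ∈ Subgroup.zpowers z := by rw [hzt]; trivial
    have hb : b ∈ Subgroup.zpowers z := by rw [hzt]; trivial
    obtain ⟨ma, rfl⟩ := ha
    obtain ⟨mb, rfl⟩ := hb
    rw [← zpow_add, ← zpow_add, add_comm]
  -- conclude
  rw [Rsub]
  apply sup_le
  · rw [commutator, Subgroup.commutator_le]
    intro g₁ _ g₂ _
    have : π ⁅g₁, g₂⁆ = 1 := by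
      have : π ⁅g₁, g₂⁆ = ⁅π g₁, π g₂⁆ := by
        simp [commutatorElement_def, map_mul, map_inv]
      rw [this]
      exact commutatorElement_eq_one_iff_commute.mpr (hcomm _ _)
    exact (QuotientGroup.eq_one_iff _).1 this
  · rw [Subgroup.closure_le]
    rintro x ⟨g, rfl⟩
    have : π (g ^ p) = 1 := by
      rw [map_pow]
      exact hexp (π g)
    exact (QuotientGroup.eq_one_iff _).1 this

lemma Rsub_le_frattini {Q : Type*} [Group Q] [Finite Q] (hQ : IsPGroup p Q) :
    Rsub p Q ≤ frattini Q := by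
  rw [frattini, Order.radical]
  exact le_iInf₂ fun M hM => Rsub_le_coatom hQ hM

/-- separation of a proper subgroup in a finite p-group -/
lemma exists_hom_vanishing_on_proper {Q : Type*} [Group Q] [Finite Q] (hQ : IsPGroup p Q)
    {H : Subgroup Q} (hH : H ≠ ⊤) :
    ∃ f : Q →* Multiplicative (ZMod p), (∀ h ∈ H, f h = 1) ∧ f ≠ 1 := by
  have hN : H ⊔ Rsub p Q ≠ ⊤ := by
    intro hc
    apply hH
    apply frattini_nongenerating (K := H)
    rw [eq_top_iff, ← hc]
    exact sup_le le_sup_left (le_trans (Rsub_le_frattini hQ) le_sup_right)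
  obtain ⟨x, hx⟩ : ∃ x, x ∉ H ⊔ Rsub p Q := by
    by_contra h
    push_neg at h
    exact hN ((Subgroup.eq_top_iff' _).2 h)
  obtain ⟨f, hf1, hf2⟩ := exists_hom_of_not_mem (N := H ⊔ Rsub p Q) le_sup_right hx
  refine ⟨f, fun h hh => hf1 h (Subgroup.mem_sup_left hh), ?_⟩
  intro hc
  rw [hc] at hf2
  exact hf2 rfl
-- pro-p infrastructure
section ProP

variable {G : Type*} [Group G] [TopologicalSpace G] [IsTopologicalGroup G]

omit [Fact p.Prime] in
lemma IsProP.exists_openNormal (hG : IsProP p G) {W : Set G} (hW : IsOpen W)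
    (h1 : (1 : G) ∈ W) :
    ∃ N : Subgroup G, N.Normal ∧ IsOpen (N : Set G) ∧ (N : Set G) ⊆ W := by
  obtain ⟨-, hcomp, ht2, htd, -⟩ := hG
  haveI := hcomp; haveI := ht2; haveI := htd
  obtain ⟨V, hV, h1V, hVW⟩ := compact_exists_isClopen_in_isOpen hW h1
  obtain ⟨H, hH⟩ := IsTopologicalGroup.exist_openNormalSubgroup_sub_clopen_nhds_of_one hV h1V
  exact ⟨H.toSubgroup, H.isNormal', H.toOpenSubgroup.isOpen', hH.trans hVW⟩

lemma IsProP.finite_quotient (hG : IsProP p G) (N : Subgroup G) [N.Normal]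
    (hNo : IsOpen (N : Set G)) : Finite (G ⧸ N) ∧ IsPGroup p (G ⧸ N) := by
  obtain ⟨k, hk⟩ := hG.2.2.2.2 N inferInstance hNo
  have hcard : Nat.card (G ⧸ N) = p ^ k := hk
  have hne : Nat.card (G ⧸ N) ≠ 0 := by
    rw [hcard]
    exact pow_ne_zero _ (Fact.out : p.Prime).ne_zero
  exact ⟨Nat.finite_of_card_ne_zero hne, IsPGroup.of_card hcard⟩

omit [Fact p.Prime] in
lemma continuous_of_open_ker {P : Type*} [Group P] [TopologicalSpace P] [DiscreteTopology P]
    (f : G →* P) {N : Subgroup G} (hNo : IsOpen (N : Set G)) (hker : N ≤ f.ker) :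
    Continuous f := by
  constructor
  intro s _
  rw [isOpen_iff_forall_mem_open]
  intro x hx
  refine ⟨(fun y => x * y) '' (N : Set G), ?_, isOpenMap_mul_left x _ hNo, ⟨1, N.one_mem, mul_one x⟩⟩
  rintro - ⟨n, hn, rfl⟩
  show f (x * n) ∈ s
  rw [map_mul, hker hn, mul_one]
  exact hx

omit [Fact p.Prime] in
lemma map_Rsub_of_surjective {Q : Type*} [Group Q] (f : G →* Q)
    (hf : Function.Surjective f) : Subgroup.map f (Rsub p G) = Rsub p Q := by
  rw [Rsub, Rsub, Subgroup.map_sup]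
  congr 1
  · rw [commutator, commutator, Subgroup.map_commutator,
      Subgroup.map_top_of_surjective f hf]
  · rw [MonoidHom.map_closure]
    congr 1
    ext y
    constructor
    · rintro ⟨-, ⟨g, rfl⟩, rfl⟩
      exact ⟨f g, (map_pow f g p).symm⟩
    · rintro ⟨q, rfl⟩
      obtain ⟨g, rfl⟩ := hf q
      exact ⟨g ^ p, ⟨g, rfl⟩, map_pow f g p⟩

lemma pow_p_eq_one (y : Multiplicative (ZMod p)) : y ^ p = 1 := by
  haveI : NeZero p := ⟨(Fact.out : p.Prime).ne_zero⟩
  apply Multiplicative.toAdd.injective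
  rw [toAdd_pow, nsmul_eq_mul, ZMod.natCast_self, zero_mul]
  rfl

/-- Easy direction: any continuous homomorphism to `ZMod p` kills the Frattini subgroup. -/
lemma vanish_on_proFrattini (f : G →* Multiplicative (ZMod p)) (hf : Continuous f)
    {x : G} (hx : x ∈ proFrattini p G) : f x = 1 := by
  have hker : Rsub p G ≤ f.ker := by
    rw [Rsub]
    apply sup_le
    · rw [commutator, Subgroup.commutator_le]
      intro g₁ _ g₂ _
      show f ⁅g₁, g₂⁆ = 1
      rw [map_commutatorElement]
      exact commutatorElement_eq_one_iff_commute.mpr (mul_comm _ _)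
    · rw [Subgroup.closure_le]
      rintro - ⟨g, rfl⟩
      show f (g ^ p) = 1
      rw [map_pow]
      exact pow_p_eq_one _
  have hclosed : IsClosed (f.ker : Set G) := by
    have : (f.ker : Set G) = f ⁻¹' {1} := rfl
    rw [this]
    exact (isClosed_discrete {1}).preimage hf
  exact Subgroup.topologicalClosure_minimal _ hker hclosed hx

/-- Hard direction: separation of a non-Frattini element. -/
lemma exists_hom_of_not_mem_proFrattini (hG : IsProP p G) {x : G}
    (hx : x ∉ proFrattini p G) :
    ∃ f : G →* Multiplicative (ZMod p), Continuous f ∧ f x ≠ 1 := by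
  have hxc : x ∈ (closure ((Rsub p G : Set G)))ᶜ := hx
  have hop : IsOpen {g : G | x * g ∈ (closure ((Rsub p G : Set G)))ᶜ} := by
    exact (isClosed_closure.isOpen_compl).preimage (continuous_mul_left x)
  have h1 : (1 : G) ∈ {g : G | x * g ∈ (closure ((Rsub p G : Set G)))ᶜ} := by
    simpa using hxc
  obtain ⟨N, hNn, hNo, hNW⟩ := hG.exists_openNormal hop h1
  haveI := hNn
  obtain ⟨hfin, hpgrp⟩ := hG.finite_quotient N hNo
  haveI := hfin
  set π : G →* G ⧸ N := QuotientGroup.mk' N with hπ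
  have hxQ : π x ∉ Rsub p (G ⧸ N) := by
    rw [← map_Rsub_of_surjective π (QuotientGroup.mk'_surjective N)]
    rintro ⟨r, hr, hrx⟩
    have : x⁻¹ * r ∈ N := by
      rw [← QuotientGroup.eq]
      exact hrx.symm
    have hrmem : r ∈ (closure ((Rsub p G : Set G)))ᶜ := by
      have := hNW this
      simpa using this
    exact hrmem (subset_closure hr)
  obtain ⟨fbar, hfv, hfx⟩ := exists_hom_of_not_mem (le_refl (Rsub p (G ⧸ N))) hxQ
  refine ⟨fbar.comp π, ?_, hfx⟩
  apply continuous_of_open_ker _ hNo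
  intro n hn
  show fbar (π n) = 1
  rw [show π n = 1 from (QuotientGroup.eq_one_iff n).2 hn, map_one]

/-- Separation of a proper closed subgroup. -/
lemma exists_hom_of_ne_top (hG : IsProP p G) {H : Subgroup G}
    (hH : H.topologicalClosure ≠ ⊤) :
    ∃ f : G →* Multiplicative (ZMod p), Continuous f ∧ f ≠ 1 ∧ ∀ h ∈ H, f h = 1 := by
  obtain ⟨x, hx⟩ : ∃ x, x ∉ H.topologicalClosure := by
    by_contra h
    push_neg at h
    exact hH ((Subgroup.eq_top_iff' _).2 h)
  have hop : IsOpen {g : G | x * g ∈ ((H.topologicalClosure : Set G))ᶜ} :=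
    (H.isClosed_topologicalClosure.isOpen_compl).preimage (continuous_mul_left x)
  have h1 : (1 : G) ∈ {g : G | x * g ∈ ((H.topologicalClosure : Set G))ᶜ} := by
    simpa using (show x ∉ (H.topologicalClosure : Set G) from hx)
  obtain ⟨N, hNn, hNo, hNW⟩ := hG.exists_openNormal hop h1
  haveI := hNn
  obtain ⟨hfin, hpgrp⟩ := hG.finite_quotient N hNo
  haveI := hfin
  set π : G →* G ⧸ N := QuotientGroup.mk' N with hπ
  have hH' : Subgroup.map π H.topologicalClosure ≠ ⊤ := by
    intro hc
    have : π x ∈ Subgroup.map π H.topologicalClosure := by rw [hc]; trivial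
    obtain ⟨h, hh, hhx⟩ := this
    have : x⁻¹ * h ∈ N := by
      rw [← QuotientGroup.eq]
      exact hhx.symm
    have := hNW this
    simp only [Set.mem_setOf_eq, mul_inv_cancel_left, Set.mem_compl_iff] at this
    exact this hh
  obtain ⟨fbar, hfv, hfne⟩ := exists_hom_vanishing_on_proper hpgrp hH'
  refine ⟨fbar.comp π, ?_, ?_, ?_⟩
  · apply continuous_of_open_ker _ hNo
    intro n hn
    show fbar (π n) = 1
    rw [show π n = 1 from (QuotientGroup.eq_one_iff n).2 hn, map_one]
  · intro hc
    apply hfne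
    apply MonoidHom.ext
    intro qq
    obtain ⟨g, rfl⟩ := QuotientGroup.mk'_surjective N qq
    exact DFunLike.congr_fun hc g
  · intro h hh
    exact hfv (π h) ⟨h, Subgroup.le_topologicalClosure H hh, rfl⟩

end ProP
-- the F_p vector space of continuous characters
set_option maxHeartbeats 1000000
set_option synthInstance.maxHeartbeats 400000
section HomModule

open Module

variable (p : ℕ) [Fact p.Prime] (G : Type*) [Group G] [TopologicalSpace G]
  [IsTopologicalGroup G]

instance homKModule : Module (ZMod p) (Additive (G →* Multiplicative (ZMod p))) :=
  AddCommGroup.zmodModule (by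
    intro f
    apply Additive.toMul.injective
    show Additive.toMul (p • f) = 1
    have h1 : Additive.toMul (p • f) = (Additive.toMul f) ^ p := rfl
    rw [h1]
    ext x
    rw [MonoidHom.pow_apply]
    exact pow_p_eq_one _)

/-- the subgroup of continuous characters -/
def contHomAdd : AddSubgroup (Additive (G →* Multiplicative (ZMod p))) where
  carrier := {f | Continuous ⇑(Additive.toMul f)}
  zero_mem' := by
    show Continuous ⇑(1 : G →* Multiplicative (ZMod p))
    have : ⇑(1 : G →* Multiplicative (ZMod p)) = fun _ => 1 := rfl
    rw [this]; exact continuous_const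
  add_mem' := by
    intro a b ha hb
    show Continuous ⇑(Additive.toMul a * Additive.toMul b)
    have : ⇑(Additive.toMul a * Additive.toMul b)
        = fun x => Additive.toMul a x * Additive.toMul b x := rfl
    rw [this]
    exact (ha : Continuous _).mul (hb : Continuous _)
  neg_mem' := by
    intro a ha
    show Continuous ⇑(Additive.toMul a)⁻¹
    have : ⇑(Additive.toMul a)⁻¹ = fun x => (Additive.toMul a x)⁻¹ := by
      funext x; rw [MonoidHom.inv_apply]
    rw [this]
    exact (ha : Continuous _).inv

def contHomSub : Submodule (ZMod p) (Additive (G →* Multiplicative (ZMod p))) :=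
  AddSubgroup.toZModSubmodule p (contHomAdd p G)

lemma mem_contHomSub {f : Additive (G →* Multiplicative (ZMod p))} :
    f ∈ contHomSub p G ↔ Continuous ⇑(Additive.toMul f) := Iff.rfl

/-- evaluation linear map at a tuple of points -/
def evalAt {n : ℕ} (x : Fin n → G) :
    contHomSub p G →ₗ[ZMod p] (Fin n → ZMod p) :=
  AddMonoidHom.toZModLinearMap p
    { toFun := fun f i => Multiplicative.toAdd (Additive.toMul (f : Additive (G →* Multiplicative (ZMod p))) (x i))
      map_zero' := rfl
      map_add' := fun f g => rfl }

lemma evalAt_apply {n : ℕ} (x : Fin n → G) (f : contHomSub p G) (i : Fin n) :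
    evalAt p G x f i
      = Multiplicative.toAdd (Additive.toMul (f : Additive (G →* Multiplicative (ZMod p))) (x i)) := rfl

/-- a character vanishing on a topologically generating set is trivial -/
lemma char_eq_one_of_vanish {n : ℕ} {x : Fin n → G}
    (hx : (Subgroup.closure (Set.range x)).topologicalClosure = ⊤)
    (F : G →* Multiplicative (ZMod p)) (hF : Continuous F) (hv : ∀ i, F (x i) = 1) :
    F = 1 := by
  have hker : (Subgroup.closure (Set.range x)).topologicalClosure ≤ F.ker := by
    apply Subgroup.topologicalClosure_minimal
    · rw [Subgroup.closure_le]
      rintro - ⟨i, rfl⟩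
      exact hv i
    · have : (F.ker : Set G) = F ⁻¹' {1} := rfl
      rw [this]
      exact (isClosed_discrete {1}).preimage hF
  rw [hx] at hker
  ext g
  exact hker (Subgroup.mem_top g)

lemma evalAt_injective {n : ℕ} {x : Fin n → G}
    (hx : (Subgroup.closure (Set.range x)).topologicalClosure = ⊤) :
    Function.Injective (evalAt p G x) := by
  have h0 : ∀ f : contHomSub p G, evalAt p G x f = 0 → f = 0 := by
    intro f hf
    have hF : Additive.toMul (f : Additive (G →* Multiplicative (ZMod p))) = 1 := by
      apply char_eq_one_of_vanish p G hx _ f.2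
      intro i
      have := congrFun hf i
      rw [evalAt_apply] at this
      exact Multiplicative.toAdd.injective this
    apply Subtype.ext
    exact Additive.toMul.injective hF
  intro a b hab
  have : a - b = 0 := h0 _ (by rw [map_sub, hab, sub_self])
  exact sub_eq_zero.mp this

lemma fd_and_finrank_le_of_generates {n : ℕ} {x : Fin n → G}
    (hx : (Subgroup.closure (Set.range x)).topologicalClosure = ⊤) :
    FiniteDimensional (ZMod p) (contHomSub p G) ∧
      Module.finrank (ZMod p) (contHomSub p G) ≤ n := by
  have hinj := evalAt_injective p G hx
  haveI : FiniteDimensional (ZMod p) (contHomSub p G) :=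
    FiniteDimensional.of_injective (evalAt p G x) hinj
  refine ⟨inferInstance, ?_⟩
  have := LinearMap.finrank_le_finrank_of_injective hinj
  rwa [Module.finrank_fintype_fun_eq_card, Fintype.card_fin] at this

/-- single-point evaluation -/
def evalOne (g : G) : contHomSub p G →ₗ[ZMod p] ZMod p :=
  AddMonoidHom.toZModLinearMap p
    { toFun := fun f => Multiplicative.toAdd (Additive.toMul (f : Additive (G →* Multiplicative (ZMod p))) g)
      map_zero' := rfl
      map_add' := fun f g => rfl }

lemma exists_generating_tuple (hG : IsProP p G)
    [FiniteDimensional (ZMod p) (contHomSub p G)] :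
    ∃ (m : ℕ) (x : Fin m → G), m ≤ Module.finrank (ZMod p) (contHomSub p G) ∧
      (Subgroup.closure (Set.range x)).topologicalClosure = ⊤ := by
  have greed : ∀ (d : ℕ) (W : Submodule (ZMod p) (contHomSub p G)),
      Module.finrank (ZMod p) W ≤ d →
      ∃ (m : ℕ) (x : Fin m → G), m ≤ Module.finrank (ZMod p) W ∧
        ∀ f ∈ W, (∀ i,
          Additive.toMul (f : Additive (G →* Multiplicative (ZMod p))) (x i) = 1) → f = 0 := by
    intro d
    induction d with
    | zero =>
      intro W hW
      refine ⟨0, fun i => i.elim0, Nat.zero_le _, ?_⟩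
      intro f hf _
      have : W = ⊥ := Submodule.finrank_eq_zero.mp (Nat.le_zero.mp hW)
      rw [this] at hf
      exact hf
    | succ d ih =>
      intro W hW
      by_cases hWbot : W = ⊥
      · refine ⟨0, fun i => i.elim0, Nat.zero_le _, ?_⟩
        intro f hf _
        rw [hWbot] at hf
        exact hf
      · obtain ⟨f, hfW, hf0⟩ := Submodule.ne_bot_iff W |>.mp hWbot
        have hF : Additive.toMul (f : Additive (G →* Multiplicative (ZMod p))) ≠ 1 := by
          intro hc
          exact hf0 (Subtype.ext (Additive.toMul.injective hc))
        obtain ⟨g, hg⟩ := DFunLike.ne_iff.mp hF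
        have hWlt : W ⊓ LinearMap.ker (evalOne p G g) < W := by
          refine lt_of_le_of_ne inf_le_left ?_
          intro hc
          have hmem : f ∈ W ⊓ LinearMap.ker (evalOne p G g) := by rw [hc]; exact hfW
          have h2 : evalOne p G g f = 0 :=
            LinearMap.mem_ker.mp (Submodule.mem_inf.mp hmem).2
          have h3 : Multiplicative.toAdd
              (Additive.toMul (f : Additive (G →* Multiplicative (ZMod p))) g) = 0 := h2
          apply hg
          have h4 := congrArg Multiplicative.ofAdd h3
          simpa using h4
        have hlt : Module.finrank (ZMod p) (W ⊓ LinearMap.ker (evalOne p G g) : Submodule _ _) <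
            Module.finrank (ZMod p) W := Submodule.finrank_lt_finrank_of_lt hWlt
        obtain ⟨m, x, hm, hx⟩ := ih (W ⊓ LinearMap.ker (evalOne p G g)) (by omega)
        refine ⟨m + 1, Fin.cons g x, by omega, ?_⟩
        intro f' hf' hvan
        have h0 : Additive.toMul (f' : Additive (G →* Multiplicative (ZMod p))) g = 1 :=
          hvan 0
        have hf'W' : f' ∈ W ⊓ LinearMap.ker (evalOne p G g) := by
          rw [Submodule.mem_inf]
          refine ⟨hf', LinearMap.mem_ker.mpr ?_⟩
          show Multiplicative.toAdd
            (Additive.toMul (f' : Additive (G →* Multiplicative (ZMod p))) g) = 0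
          rw [h0]
          rfl
        apply hx f' hf'W'
        intro i
        exact hvan i.succ
  obtain ⟨m, x, hm, hx⟩ := greed (Module.finrank (ZMod p) (contHomSub p G)) ⊤
    (by rw [finrank_top])
  rw [finrank_top] at hm
  refine ⟨m, x, hm, ?_⟩
  by_contra hne
  obtain ⟨F, hFcont, hFne, hFvan⟩ := exists_hom_of_ne_top hG hne
  have : (⟨Additive.ofMul F, hFcont⟩ : contHomSub p G) = 0 := by
    apply hx _ (Submodule.mem_top)
    intro i
    exact hFvan (x i) (Subgroup.subset_closure ⟨i, rfl⟩)
  apply hFne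
  have := congrArg (fun f : contHomSub p G =>
    Additive.toMul (f : Additive (G →* Multiplicative (ZMod p)))) this
  simpa using this

lemma topGenNum_eq_finrank (hG : IsProP p G)
    [FiniteDimensional (ZMod p) (contHomSub p G)] :
    topGenNum G = Module.finrank (ZMod p) (contHomSub p G) := by
  obtain ⟨m, x, hm, hx⟩ := exists_generating_tuple p G hG
  apply le_antisymm
  · exact le_trans (Nat.sInf_le ⟨x, hx⟩) hm
  · have hne : {n : ℕ | ∃ s : Fin n → G,
        (Subgroup.closure (Set.range s)).topologicalClosure = ⊤}.Nonempty := ⟨m, x, hx⟩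
    apply le_csInf hne
    rintro n ⟨s, hs⟩
    exact (fd_and_finrank_le_of_generates p G hs).2

end HomModule
-- main theorem assembly helpers
section Main

open Module

variable {p : ℕ} [Fact p.Prime]

lemma isPGroup_K : IsPGroup p (Multiplicative (ZMod p)) := by
  haveI : NeZero p := ⟨(Fact.out : p.Prime).ne_zero⟩
  apply IsPGroup.of_card (n := 1)
  rw [pow_one]
  rw [Nat.card_congr (Multiplicative.toAdd (α := ZMod p))]
  exact Nat.card_zmod p

-- bridging: membership in the Frattini subgroup is detected by continuous characters
lemma mem_proFrattini_iff_chars {G : Type*} [Group G] [TopologicalSpace G]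
    [IsTopologicalGroup G] (hG : IsProP p G) (z : G) :
    z ∈ proFrattini p G ↔
      ∀ f : G →* Multiplicative (ZMod p), Continuous f → f z = 1 := by
  constructor
  · intro hz f hf
    exact vanish_on_proFrattini f hf hz
  · intro h
    by_contra hz
    obtain ⟨f, hfc, hfz⟩ := exists_hom_of_not_mem_proFrattini hG hz
    exact hfz (h f hfc)

end Main

/-- Let `A` be a pro-`p` group obtained from a finitely generated
pro-`p` group `B` by `k` successive proper pro-`p` HNN extensions with stable letters
`t₁, …, t_k` and associated procyclic subgroups `C_i = ⟨c_i⟩`, `C̃_i = ⟨c̃_i⟩ ≤ B`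
(with `c_i^{t_i} = c̃_i`); `A` is characterized by its universal property for
continuous maps to finite `p`-groups.  Then `d(B) ≤ d(A) ≤ d(B) + k`; moreover
`d(A) = d(B)` if and only if the images of `c_i⁻¹·c̃_i` (`1 ≤ i ≤ k`) in `B/Φ(B)`
are linearly independent over `𝔽_p`. -/
theorem rank_iterated_proP_HNN_extension
    {p : ℕ} (hp : p.Prime)
    {B : Type*} [Group B] [TopologicalSpace B] [IsTopologicalGroup B]
    {A : Type*} [Group A] [TopologicalSpace A] [IsTopologicalGroup A]
    (hB : IsProP p B) (hA : IsProP p A) (hfgB : TopFG B)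
    {k : ℕ} (ι : B →* A) (hιcont : Continuous ι) (hιinj : Function.Injective ι)
    (c c' : Fin k → B) (t : Fin k → A)
    (hrel : ∀ i, (t i)⁻¹ * ι (c i) * t i = ι (c' i))
    (huniv : ∀ (P : Type) [Group P] [Finite P] [TopologicalSpace P]
      [DiscreteTopology P], IsPGroup p P →
      ∀ (f : B →* P), Continuous f → ∀ s : Fin k → P,
        (∀ i, (s i)⁻¹ * f (c i) * s i = f (c' i)) →
        ∃! φ : A →* P, Continuous φ ∧ φ.comp ι = f ∧ ∀ i, φ (t i) = s i) :
    (topGenNum B ≤ topGenNum A ∧ topGenNum A ≤ topGenNum B + k) ∧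
    (topGenNum A = topGenNum B ↔
      ∀ m : Fin k → ℕ,
        ((List.finRange k).map (fun i => ((c i)⁻¹ * c' i) ^ m i)).prod ∈
            proFrattini p B →
          ∀ i, (m i : ZMod p) = 0) := by
  haveI : Fact p.Prime := ⟨hp⟩
  haveI : NeZero p := ⟨hp.ne_zero⟩
  classical
  set K := Multiplicative (ZMod p) with hK
  -- B side is finite dimensional
  haveI hfdB : FiniteDimensional (ZMod p) (contHomSub p B) := by
    obtain ⟨n, s, hs⟩ := hfgB
    exact (fd_and_finrank_le_of_generates p B hs).1
  set u : Fin k → B := fun i => (c i)⁻¹ * c' i with hu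
  set e := evalAt p B u with he
  -- every continuous character of A restricted to B kills the u i
  have hresu : ∀ (F : A →* K), ∀ i, F (ι (u i)) = 1 := by
    intro F i
    have h1 : F (ι (c' i)) = F (ι (c i)) := by
      rw [← hrel i]
      simp only [map_mul, map_inv]
      rw [mul_comm ((F (t i))⁻¹) (F (ι (c i))), mul_assoc]
      simp
      exact inv_mul_cancel _
    have : F (ι (u i)) = (F (ι (c i)))⁻¹ * F (ι (c' i)) := by
      simp [hu, map_mul, map_inv]
    rw [this, h1]
    exact inv_mul_cancel _
  -- the comparison linear map
  have memker : ∀ φ : contHomSub p A,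
      (⟨Additive.ofMul ((Additive.toMul (φ : Additive (A →* K))).comp ι),
        ((φ.2 : Continuous _).comp hιcont : Continuous _)⟩ : contHomSub p B)
        ∈ LinearMap.ker e := by
    intro φ
    rw [LinearMap.mem_ker]
    funext i
    show Multiplicative.toAdd
      ((Additive.toMul (φ : Additive (A →* K))).comp ι (u i)) = 0
    rw [show (Additive.toMul (φ : Additive (A →* K))).comp ι (u i)
        = Additive.toMul (φ : Additive (A →* K)) (ι (u i)) from rfl]
    rw [hresu (Additive.toMul (φ : Additive (A →* K))) i]
    rfl
  set Θ : contHomSub p A →ₗ[ZMod p]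
      (LinearMap.ker e × (Fin k → ZMod p)) :=
    AddMonoidHom.toZModLinearMap p
      { toFun := fun φ =>
          (⟨⟨Additive.ofMul ((Additive.toMul (φ : Additive (A →* K))).comp ι),
            ((φ.2 : Continuous _).comp hιcont : Continuous _)⟩, memker φ⟩,
           fun i => Multiplicative.toAdd
            (Additive.toMul (φ : Additive (A →* K)) (t i)))
        map_zero' := rfl
        map_add' := fun φ ψ => rfl } with hΘ
  -- injectivity
  have hΘinj : Function.Injective Θ := by
    have h0 : ∀ φ : contHomSub p A, Θ φ = 0 → φ = 0 := by
      intro φ hφ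
      set F := Additive.toMul (φ : Additive (A →* K)) with hF
      have hcomp : F.comp ι = 1 := by
        have h' := congrArg (fun q : (LinearMap.ker e × (Fin k → ZMod p)) =>
          Additive.toMul ((q.1 : contHomSub p B) : Additive (B →* K))) hφ
        exact h'
      have htv : ∀ i, F (t i) = 1 := by
        intro i
        have := congrArg (fun q => q.2 i) hφ
        have h2 : Multiplicative.toAdd (F (t i)) = 0 := this
        have := congrArg Multiplicative.ofAdd h2
        simpa using this
      -- apply the uniqueness part of the universal property with the trivial data
      have h1cont : Continuous ⇑(1 : B →* K) := by
        have : ⇑(1 : B →* K) = fun _ => 1 := rfl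
        rw [this]; exact continuous_const
      obtain ⟨ψ, hψ, hψuniq⟩ := huniv K isPGroup_K (1 : B →* K) h1cont
        (fun _ => 1) (by intro i; simp)
      have hFψ : F = ψ := hψuniq F ⟨φ.2, hcomp, htv⟩
      have h1ψ : (1 : A →* K) = ψ := hψuniq 1 ⟨(by
        have : ⇑(1 : A →* K) = fun _ => 1 := rfl
        rw [this]; exact continuous_const), by ext b; rfl, fun i => rfl⟩
      apply Subtype.ext
      apply Additive.toMul.injective
      show F = Additive.toMul (0 : Additive (A →* K))
      rw [hFψ, ← h1ψ]
      rfl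
    intro a b hab
    have : a - b = 0 := h0 _ (by rw [map_sub, hab, sub_self])
    exact sub_eq_zero.mp this
  -- surjectivity
  have hΘsurj : Function.Surjective Θ := by
    rintro ⟨⟨fB, hfB⟩, v⟩
    set F0 := Additive.toMul (fB : Additive (B →* K)) with hF0
    have hF0cont : Continuous ⇑F0 := fB.2
    have hcc' : ∀ i, F0 (c i) = F0 (c' i) := by
      intro i
      have h1 : Multiplicative.toAdd (F0 (u i)) = 0 := by
        have := congrFun (LinearMap.mem_ker.mp hfB) i
        exact this
      have h2 : F0 (u i) = 1 := by
        have := congrArg Multiplicative.ofAdd h1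
        simpa using this
      have : (F0 (c i))⁻¹ * F0 (c' i) = 1 := by
        rw [← map_inv, ← map_mul]
        exact h2
      exact inv_mul_eq_one.mp this
    obtain ⟨φ, ⟨hφc, hφι, hφt⟩, -⟩ := huniv K isPGroup_K F0 hF0cont
      (fun i => Multiplicative.ofAdd (v i))
      (by
        intro i
        rw [mul_comm ((Multiplicative.ofAdd (v i))⁻¹) (F0 (c i)), mul_assoc]
        simp [hcc' i]
        exact inv_mul_cancel (Multiplicative.ofAdd (v i)))
    refine ⟨⟨Additive.ofMul φ, hφc⟩, ?_⟩
    have hfst : ((Θ ⟨Additive.ofMul φ, hφc⟩).1 : contHomSub p B) = fB := by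
      apply Subtype.ext
      show Additive.ofMul (φ.comp ι) = (fB : Additive (B →* K))
      rw [hφι]
      rfl
    refine Prod.ext (Subtype.ext ?_) ?_
    · exact hfst
    · funext i
      show Multiplicative.toAdd (φ (t i)) = v i
      rw [hφt i]
      rfl
  -- dimension bookkeeping
  haveI hfdA : FiniteDimensional (ZMod p) (contHomSub p A) :=
    FiniteDimensional.of_injective Θ hΘinj
  have hAval : topGenNum A = Module.finrank (ZMod p) (contHomSub p A) :=
    topGenNum_eq_finrank p A hA
  have hBval : topGenNum B = Module.finrank (ZMod p) (contHomSub p B) :=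
    topGenNum_eq_finrank p B hB
  have hAeq : Module.finrank (ZMod p) (contHomSub p A)
      = Module.finrank (ZMod p) (LinearMap.ker e) + k := by
    have heq := LinearEquiv.finrank_eq (LinearEquiv.ofBijective Θ ⟨hΘinj, hΘsurj⟩)
    rw [heq, Module.finrank_prod, Module.finrank_fintype_fun_eq_card, Fintype.card_fin]
  have hrn : Module.finrank (ZMod p) (LinearMap.range e)
      + Module.finrank (ZMod p) (LinearMap.ker e)
      = Module.finrank (ZMod p) (contHomSub p B) :=
    LinearMap.finrank_range_add_finrank_ker e
  have hrk : Module.finrank (ZMod p) (LinearMap.range e) ≤ k := by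
    have := Submodule.finrank_le (LinearMap.range e)
    rwa [Module.finrank_fintype_fun_eq_card, Fintype.card_fin] at this
  constructor
  · constructor
    · omega
    · omega
  · -- the equality criterion
    have hsurj_iff : topGenNum A = topGenNum B ↔ LinearMap.range e = ⊤ := by
      constructor
      · intro h
        apply Submodule.eq_top_of_finrank_eq
        rw [Module.finrank_fintype_fun_eq_card, Fintype.card_fin]
        omega
      · intro h
        have : Module.finrank (ZMod p) (LinearMap.range e) = k := by
          rw [h, finrank_top, Module.finrank_fintype_fun_eq_card, Fintype.card_fin]
        omega
    rw [hsurj_iff]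
    -- bridge between Frattini membership and character sums
    have hbridge : ∀ m : Fin k → ℕ,
        (((List.finRange k).map (fun i => (u i) ^ m i)).prod ∈ proFrattini p B) ↔
        (∀ fB : contHomSub p B, ∑ i, (m i : ZMod p) * (e fB i) = 0) := by
      intro m
      have hval : ∀ fB : contHomSub p B,
          Multiplicative.toAdd (Additive.toMul (fB : Additive (B →* K))
            (((List.finRange k).map (fun i => (u i) ^ m i)).prod))
          = ∑ i, (m i : ZMod p) * (e fB i) := by
        intro fB
        set F := Additive.toMul (fB : Additive (B →* K)) with hF
        rw [map_list_prod, List.map_map]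
        have : (⇑F ∘ fun i => u i ^ m i) = fun i => F (u i) ^ m i := by
          funext i; exact map_pow F (u i) (m i)
        rw [this, ← Fin.prod_univ_def, toAdd_prod]
        congr 1
        funext i
        rw [toAdd_pow, nsmul_eq_mul]
        rfl
      rw [mem_proFrattini_iff_chars hB]
      constructor
      · intro h fB
        rw [← hval fB]
        have := h (Additive.toMul (fB : Additive (B →* K))) fB.2
        rw [this]
        rfl
      · intro h f hfc
        have := h ⟨Additive.ofMul f, hfc⟩
        rw [← hval ⟨Additive.ofMul f, hfc⟩] at this
        apply Multiplicative.toAdd.injective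
        exact this
    constructor
    · -- surjective → independence
      intro hsurj m hm i₀
      obtain ⟨fB, hfB⟩ : ∃ fB : contHomSub p B,
          e fB = fun j => if i₀ = j then 1 else 0 := by
        have : (fun j => if i₀ = j then (1 : ZMod p) else 0) ∈ LinearMap.range e := by
          rw [hsurj]; trivial
        exact this
      have := (hbridge m).mp hm fB
      rw [hfB] at this
      simpa using this
    · -- independence → surjective
      intro hind
      by_contra hne
      obtain ⟨w, hw⟩ : ∃ w, w ∉ LinearMap.range e := by
        by_contra h
        push_neg at h
        exact hne (Submodule.eq_top_iff'.mpr h)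
      have hwne : (Submodule.Quotient.mk w : (Fin k → ZMod p) ⧸ LinearMap.range e) ≠ 0 := by
        rw [Ne, Submodule.Quotient.mk_eq_zero]
        exact hw
      obtain ⟨ψ, hψ⟩ : ∃ ψ : Module.Dual (ZMod p) ((Fin k → ZMod p) ⧸ LinearMap.range e),
          ψ (Submodule.Quotient.mk w) ≠ 0 := by
        by_contra h
        push_neg at h
        exact hwne ((Module.forall_dual_apply_eq_zero_iff (ZMod p) _).mp h)
      set μ := ψ.comp (LinearMap.range e).mkQ with hμdef
      have hμrange : ∀ y ∈ LinearMap.range e, μ y = 0 := by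
        intro y hy
        show ψ (Submodule.Quotient.mk y) = 0
        rw [(Submodule.Quotient.mk_eq_zero _).2 hy, map_zero]
      set a : Fin k → ZMod p := fun i => μ (fun j => if i = j then 1 else 0) with ha
      have hμeval : ∀ y : Fin k → ZMod p, μ y = ∑ i, y i * a i := by
        intro y
        conv_lhs => rw [pi_eq_sum_univ y]
        rw [map_sum]
        congr 1
        funext i
        rw [map_smul, smul_eq_mul]
      set m : Fin k → ℕ := fun i => (a i).val with hm
      have hma : ∀ i, (m i : ZMod p) = a i := fun i => ZMod.natCast_rightInverse (a i)
      have hmem : ((List.finRange k).map (fun i => (u i) ^ m i)).prod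
          ∈ proFrattini p B := by
        rw [hbridge m]
        intro fB
        have : ∑ i, (m i : ZMod p) * (e fB i) = μ (e fB) := by
          rw [hμeval]
          congr 1
          funext i
          rw [hma i, mul_comm]
        rw [this]
        exact hμrange _ ⟨fB, rfl⟩
      have hall := hind m hmem
      have hzero : ∀ i, a i = 0 := by
        intro i
        rw [← hma i]
        exact hall i
      apply hψ
      show μ w = 0
      rw [hμeval]
      apply Finset.sum_eq_zero
      intro i _
      rw [hzero i, mul_zero]
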